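/- A distance distribution function f is continuous on a closed interval [a,b] ⊆ [0,∞] if and only if its largest quasi-inverse f∨ is strictly increasing on the interval [f(a), f(b)]. -/

import Mathlib

open ENNReal Set Filter Topology

/-- A distance distribution function: increasing `f : [0,∞] → [0,1]` with
`f 0 = 0`, `f ∞ = 1`, left continuous on `(0,∞)`. -/
def IsDDF (f : ℝ≥0∞ → ℝ≥0∞) : Prop :=
  Monotone f ∧ (∀ x, f x ≤ 1) ∧ f 0 = 0 ∧ f ⊤ = 1 ∧
    ∀ x : ℝ≥0∞, 0 < x → x < ⊤ → f x = ⨆ y ∈ Set.Iio x, f y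

/-- The largest quasi-inverse `f∨ y = inf {x | f x > y}`. -/
noncomputable def qInv (f : ℝ≥0∞ → ℝ≥0∞) : ℝ≥0∞ → ℝ≥0∞ :=
  fun y => sInf {x | y < f x}

private lemma sInf_Ioi_ennreal (c : ℝ≥0∞) : sInf (Ioi c) = c := by
  refine le_antisymm ?_ (le_sInf fun x hx => (mem_Ioi.mp hx).le)
  by_contra h
  push_neg at h
  obtain ⟨y, hy1, hy2⟩ := exists_between h
  exact absurd (sInf_le (mem_Ioi.mpr hy1)) (not_le.mpr hy2)

theorem continuousOn_iff_qInv_strictMonoOn (f : ℝ≥0∞ → ℝ≥0∞) (hf : IsDDF f)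
    (a b : ℝ≥0∞) (hab : a ≤ b) :
    ContinuousOn f (Set.Icc a b) ↔ StrictMonoOn (qInv f) (Set.Icc (f a) (f b)) := by
  obtain ⟨hmono, hle1, hf0, hfT, hsup⟩ := hf
  constructor
  · -- continuity on [a,b] implies strict monotonicity of qInv on [f a, f b]
    intro hcont y1 hy1 y2 hy2 h12
    have hle : qInv f y1 ≤ qInv f y2 :=
      sInf_le_sInf fun x hx => lt_of_le_of_lt h12.le hx
    rcases hle.lt_or_eq with h | heq
    · exact h
    exfalso
    set c := qInv f y2 with hc
    have hceq : qInv f y1 = c := heq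
    -- a ≤ c
    have hac : a ≤ c :=
      le_sInf fun x hx => (hmono.reflect_lt (lt_of_le_of_lt hy2.1 hx)).le
    -- c ≤ b
    have hcb : c ≤ b := by
      rw [← hceq]
      exact sInf_le (lt_of_lt_of_le h12 hy2.2)
    -- below c, f is ≤ y1
    have hA1 : ∀ x, x < c → f x ≤ y1 := by
      intro x hx
      by_contra h
      push_neg at h
      have : qInv f y1 ≤ x := sInf_le h
      rw [hceq] at this
      exact absurd this (not_le.mpr hx)
    rcases lt_or_eq_of_le (le_top : c ≤ ⊤) with hcT | hcT
    · -- c < ⊤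
      have hA3 : f c ≤ y1 := by
        rcases (zero_le : (0:ℝ≥0∞) ≤ c).lt_or_eq with h0 | h0
        · rw [hsup c h0 hcT]
          exact iSup₂_le fun x hx => hA1 x hx
        · rw [← h0, hf0]; exact zero_le
      rcases lt_or_eq_of_le hcb with hcb' | hcb'
      · -- c < b : contradiction with right-continuity at c
        have hcwa : ContinuousWithinAt f (Icc a b) c := hcont c ⟨hac, hcb⟩
        have hev : ∀ᶠ x in 𝓝[Icc a b] c, f x < y2 :=
          hcwa (isOpen_Iio.mem_nhds (lt_of_le_of_lt hA3 h12))
        have hsub : 𝓝[Ioc c b] c ≤ 𝓝[Icc a b] c :=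
          nhdsWithin_mono c fun x hx => ⟨hac.trans hx.1.le, hx.2⟩
        have hev' : ∀ᶠ x in 𝓝[>] c, f x < y2 := by
          rw [← nhdsWithin_Ioc_eq_nhdsGT hcb']
          exact hsub hev
        obtain ⟨t, hct, ht⟩ :=
          ((nhdsGT_basis_of_exists_gt ⟨b, hcb'⟩).eventually_iff).mp hev'
        have hlt : sInf {x | y2 < f x} < min t b := lt_min hct hcb'
        obtain ⟨x, hxS, hxlt⟩ := sInf_lt_iff.mp hlt
        have hcx : c ≤ x := sInf_le hxS
        have hcx' : c < x := by
          rcases hcx.lt_or_eq with h | h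
          · exact h
          · exact absurd hxS (by rw [← h]; exact not_lt.mpr (hA3.trans h12.le))
        exact absurd (ht ⟨hcx', hxlt.trans_le (min_le_left _ _)⟩)
          (not_lt.mpr (le_of_lt hxS))
      · -- c = b : f b ≤ y1 < y2 ≤ f b
        exact absurd (hy2.2.trans (hcb' ▸ hA3)) (not_le.mpr h12)
    · -- c = ⊤, hence b = ⊤
      have hb : b = ⊤ := top_le_iff.mp (hcT ▸ hcb)
      have haT : a < ⊤ := by
        rcases lt_or_eq_of_le (le_top : a ≤ ⊤) with h | h
        · exact h
        · exfalso
          have h1 : (1 : ℝ≥0∞) ≤ y1 := by rw [← hfT, ← h]; exact hy1.1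
          have h2 : y2 ≤ 1 := by rw [← hfT, ← hb]; exact hy2.2
          exact absurd (h2.trans h1) (not_le.mpr h12)
      have hcwa : ContinuousWithinAt f (Icc a b) ⊤ := hcont ⊤ ⟨le_top, hb.ge⟩
      have hsub : 𝓝[Ioo a ⊤] ⊤ ≤ 𝓝[Icc a b] ⊤ :=
        nhdsWithin_mono ⊤ fun x hx => ⟨hx.1.le, hb ▸ le_top⟩
      have hne : (𝓝[Ioo a ⊤] (⊤ : ℝ≥0∞)).NeBot := right_nhdsWithin_Ioo_neBot haT
      have htd : Tendsto f (𝓝[Ioo a ⊤] ⊤) (𝓝 1) := by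
        rw [← hfT]; exact hcwa.mono_left hsub
      have hbd : ∀ᶠ x in 𝓝[Ioo a ⊤] (⊤ : ℝ≥0∞), f x ≤ y1 :=
        eventually_mem_nhdsWithin.mono fun x hx => hA1 x (hcT ▸ hx.2)
      have h1 : (1 : ℝ≥0∞) ≤ y1 := le_of_tendsto htd hbd
      have h2 : y2 ≤ 1 := by rw [← hfT, ← hb]; exact hy2.2
      exact absurd (h2.trans h1) (not_le.mpr h12)
  · -- strict monotonicity of qInv implies continuity on [a,b]
    intro hsm c hc
    obtain ⟨hac, hcb⟩ := hc
    have key_left : ContinuousWithinAt f (Icc a c) c := by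
      rcases hac.lt_or_eq with hac' | hac'
      · -- a < c, so 0 < c
        have h0 : 0 < c := lt_of_le_of_lt (zero_le : (0:ℝ≥0∞) ≤ a) hac'
        have hIio : Tendsto f (𝓝[<] c) (𝓝 (f c)) := by
          rcases lt_or_eq_of_le (le_top : c ≤ ⊤) with hT | hT
          · have h := hmono.tendsto_nhdsLT c
            rwa [sSup_image, ← hsup c h0 hT] at h
          · -- c = ⊤; derive sSup (f '' Iio ⊤) = 1 from strict monotonicity
            have hb : b = ⊤ := top_le_iff.mp (hT ▸ hcb)
            have haT : a < ⊤ := hT ▸ hac'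
            set S := sSup (f '' Iio (⊤ : ℝ≥0∞)) with hS
            have hSle : S ≤ 1 := sSup_le fun y ⟨x, _, hx⟩ => hx ▸ hle1 x
            have hfa : f a ≤ S := le_sSup ⟨a, haT, rfl⟩
            have hSeq : S = 1 := by
              rcases hSle.lt_or_eq with hS1 | hS1
              · exfalso
                obtain ⟨y2, hy2a, hy2b⟩ := exists_between hS1
                have hq : ∀ y, S ≤ y → y < 1 → qInv f y = ⊤ := by
                  intro y hy1 hy2
                  have hset : {x | y < f x} = {⊤} := by
                    ext x
                    simp only [mem_setOf_eq, mem_singleton_iff]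
                    constructor
                    · intro hx
                      by_contra hxT
                      have : f x ≤ S := le_sSup ⟨x, lt_top_iff_ne_top.mpr hxT, rfl⟩
                      exact absurd hx (not_lt.mpr (this.trans hy1))
                    · intro hx; rw [hx, hfT]; exact hy2
                  rw [qInv, hset, sInf_singleton]
                have hm1 : S ∈ Icc (f a) (f b) := ⟨hfa, by rw [hb, hfT]; exact hSle⟩
                have hm2 : y2 ∈ Icc (f a) (f b) :=
                  ⟨hfa.trans hy2a.le, by rw [hb, hfT]; exact hy2b.le⟩
                have := hsm hm1 hm2 hy2a
                rw [hq S le_rfl hS1, hq y2 hy2a.le hy2b] at this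
                exact lt_irrefl _ this
              · exact hS1
            have h := hmono.tendsto_nhdsLT (⊤ : ℝ≥0∞)
            rw [← hS, hSeq] at h
            rwa [hT, hfT]
        have hIic : Tendsto f (𝓝[≤] c) (𝓝 (f c)) := by
          rw [← Iio_union_right, nhdsWithin_union]
          exact tendsto_sup.mpr ⟨hIio, by
            rw [nhdsWithin_singleton]; exact tendsto_pure_nhds f c⟩
        exact (show ContinuousWithinAt f (Iic c) c from hIic).mono Icc_subset_Iic_self
      · rw [← hac', Icc_self]
        exact continuousWithinAt_singleton
    have key_right : ContinuousWithinAt f (Icc c b) c := by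
      rcases hcb.lt_or_eq with hcb' | hcb'
      · -- c < b: right continuity from strict monotonicity
        have hfcL : f c ≤ sInf (f '' Ioi c) :=
          le_sInf fun y ⟨x, hx, hxy⟩ => hxy ▸ hmono (mem_Ioi.mp hx).le
        have hL : sInf (f '' Ioi c) = f c := by
          rcases hfcL.lt_or_eq with hjump | h
          · exfalso
            set L := sInf (f '' Ioi c) with hLdef
            have hLb : L ≤ f b := sInf_le ⟨b, hcb', rfl⟩
            obtain ⟨y2, hy2a, hy2b⟩ := exists_between hjump
            have hq : ∀ y, f c ≤ y → y < L → qInv f y = c := by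
              intro y hy1 hy2
              have hset : {x | y < f x} = Ioi c := by
                ext x
                simp only [mem_setOf_eq, mem_Ioi]
                constructor
                · intro hx
                  by_contra hxc
                  push_neg at hxc
                  exact absurd hx (not_lt.mpr ((hmono hxc).trans hy1))
                · intro hx
                  exact lt_of_lt_of_le hy2 (sInf_le ⟨x, hx, rfl⟩)
              rw [qInv, hset, sInf_Ioi_ennreal]
            have hm1 : f c ∈ Icc (f a) (f b) := ⟨hmono hac, hmono hcb⟩
            have hm2 : y2 ∈ Icc (f a) (f b) :=
              ⟨(hmono hac).trans hy2a.le, hy2b.le.trans hLb⟩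
            have := hsm hm1 hm2 hy2a
            rw [hq (f c) le_rfl hjump, hq y2 hy2a.le hy2b] at this
            exact lt_irrefl _ this
          · exact h.symm
        have hIoi : Tendsto f (𝓝[>] c) (𝓝 (f c)) := by
          have h := hmono.tendsto_nhdsGT c
          rwa [hL] at h
        have hIci : Tendsto f (𝓝[≥] c) (𝓝 (f c)) := by
          rw [← Ioi_union_left, nhdsWithin_union]
          exact tendsto_sup.mpr ⟨hIoi, by
            rw [nhdsWithin_singleton]; exact tendsto_pure_nhds f c⟩
        exact (show ContinuousWithinAt f (Ici c) c from hIci).mono Icc_subset_Ici_self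
      · rw [hcb', Icc_self]
        exact continuousWithinAt_singleton
    have := key_left.union key_right
    rwa [Icc_union_Icc_eq_Icc hac hcb] at this
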